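/- Let u_ε be the solution of the Bingham variational inequality in Ω_ε with forces f_ε satisfying ε^{-1/2}‖f_ε‖_{L²(Ω_ε)} ≤ C. Then there exists C' > 0 independent of ε such that ε·ε^{-1/2}‖∇u_ε‖_{L²(Ω_ε)} ≤ C' and ε^{-1/2}‖u_ε‖_{L²(Ω_ε)} ≤ C'. -/

import Mathlib

open MeasureTheory Set Filter
open scoped Classical
noncomputable section

abbrev V3 := Fin 3 → ℝ
abbrev V2 := Fin 2 → ℝ

/-- Partial derivative in direction `i` of a scalar function on `ℝ³`. -/
def pd3 (i : Fin 3) (f : V3 → ℝ) (x : V3) : ℝ := fderiv ℝ f x (Pi.single i 1)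

/-- Partial derivative in direction `i` of a scalar function on `ℝ²`. -/
def pd2 (i : Fin 2) (f : V2 → ℝ) (x : V2) : ℝ := fderiv ℝ f x (Pi.single i 1)

/-- Squared euclidean norm of a vector field at a point. -/
def vnormSq (u : V3 → V3) (x : V3) : ℝ := ∑ i, (u x i) ^ 2

/-- Squared Frobenius norm of the gradient matrix of a vector field. -/
def gradSq (u : V3 → V3) (x : V3) : ℝ := ∑ i, ∑ j, (pd3 j (fun z => u z i) x) ^ 2

/-- Pointwise Frobenius norm `|∇u|`. -/
def gradNorm (u : V3 → V3) (x : V3) : ℝ := Real.sqrt (gradSq u x)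

/-- Pointwise inner product `∇u · ∇v` of two gradient matrices. -/
def gradInner (u v : V3 → V3) (x : V3) : ℝ :=
  ∑ i, ∑ j, pd3 j (fun z => u z i) x * pd3 j (fun z => v z i) x

/-- Divergence of a vector field. -/
def divg (u : V3 → V3) (x : V3) : ℝ := ∑ i, pd3 i (fun z => u z i) x

/-- The unit square `ω = (0,1)²`. -/
def omega2 : Set V2 := {x | 0 < x 0 ∧ x 0 < 1 ∧ 0 < x 1 ∧ x 1 < 1}

/-- Horizontal projection `x̂` of a point of `ℝ³`. -/
def hat (x : V3) : V2 := ![x 0, x 1]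

/-- The thin domain `Ω_ε = {(x̂,x₃) : x̂ ∈ ω, 0 < x₃ < εG(x̂/ε)}`. -/
def thinDom (ε : ℝ) (G : V2 → ℝ) : Set V3 :=
  {x | hat x ∈ omega2 ∧ 0 < x 2 ∧ x 2 < ε * G ![x 0 / ε, x 1 / ε]}

/-- The basic cell `Y* = {(ŷ,y₃) : ŷ ∈ (0,L₁)×(0,L₂), 0 < y₃ < G(ŷ)}`. -/
def Ystar (L1 L2 : ℝ) (G : V2 → ℝ) : Set V3 :=
  {y | 0 < y 0 ∧ y 0 < L1 ∧ 0 < y 1 ∧ y 1 < L2 ∧ 0 < y 2 ∧ y 2 < G ![y 0, y 1]}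

/-- `Y`-periodicity of `G` with periods `L₁, L₂`. -/
def Yper (L1 L2 : ℝ) (G : V2 → ℝ) : Prop :=
  ∀ (y : V2) (k : Fin 2 → ℤ), G (fun i => y i + (k i : ℝ) * ![L1, L2] i) = G y

/-- The `ε`-cell containing `x̂` is entirely included in `ω=(0,1)²` (that is, `x̂ ∈ ω^ε`). -/
def cellOK (ε L1 L2 : ℝ) (xh : V2) : Prop :=
  0 ≤ ⌊xh 0 / (ε * L1)⌋ ∧ 0 ≤ ⌊xh 1 / (ε * L2)⌋ ∧
    ε * L1 * ((⌊xh 0 / (ε * L1)⌋ : ℝ) + 1) ≤ 1 ∧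
    ε * L2 * ((⌊xh 1 / (ε * L2)⌋ : ℝ) + 1) ≤ 1

/-- The unfolding operator `T_ε(φ)(x̂,y) = φ(ε[x̂/ε]_L L + εŷ, εy₃)` on `ω^ε × Y*`, `0` on `Λ^ε × Y*`. -/
def Tunf (ε L1 L2 : ℝ) (φ : V3 → ℝ) (xh : V2) (y : V3) : ℝ :=
  if cellOK ε L1 L2 xh then
    φ ![ε * ((⌊xh 0 / (ε * L1)⌋ : ℝ) * L1 + y 0),
        ε * ((⌊xh 1 / (ε * L2)⌋ : ℝ) * L2 + y 1), ε * y 2]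
  else 0

/-- Union of the cells entirely included in `Ω_ε`. -/
def thinDom0 (ε L1 L2 : ℝ) (G : V2 → ℝ) : Set V3 :=
  {x ∈ thinDom ε G | cellOK ε L1 L2 (hat x)}

set_option maxHeartbeats 1000000 in
/-- a priori estimates: under the force bound
`ε^{-1/2}‖f_ε‖_{L²(Ω_ε)} ≤ C` and the scaled Poincaré inequality, the solution
of the Bingham variational inequality satisfies `ε·ε^{-1/2}‖∇u_ε‖ ≤ C'` and
`ε^{-1/2}‖u_ε‖ ≤ C'`, with `C'` independent of `ε`. -/
theorem bingham_apriori_estimates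
    (L1 L2 G0 G1 μ g C Cp : ℝ) (hL1 : 0 < L1) (hL2 : 0 < L2) (hG0 : 0 < G0)
    (hμ : 0 < μ) (hg : 0 < g) (hC : 0 < C) (hCp : 0 < Cp)
    (G : V2 → ℝ) (hGcont : Continuous G) (hGper : Yper L1 L2 G)
    (hGlb : ∀ y, G0 ≤ G y) (hGub : ∀ y, G y ≤ G1) :
    ∃ C' > (0 : ℝ), ∀ ε > (0 : ℝ), ∀ u f : V3 → V3,
      -- u ∈ V_ε
      ContDiff ℝ 1 u →
      (∀ i, tsupport (fun x => u x i) ⊆ thinDom ε G) →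
      (∀ x, divg u x = 0) →
      -- the force bound `|||f_ε|||_{L²} ≤ C`
      Real.sqrt (ε⁻¹ * ∫ x in thinDom ε G, vnormSq f x) ≤ C →
      IntegrableOn (fun x => vnormSq f x) (thinDom ε G) →
      -- the Poincaré inequality with ε-scaling and constant Cp
      (∀ φ : V3 → V3, ContDiff ℝ 1 φ →
        (∀ i, tsupport (fun x => φ x i) ⊆ thinDom ε G) →
        ∫ x in thinDom ε G, vnormSq φ x
          ≤ (ε * Cp) ^ 2 * ∫ x in thinDom ε G, gradSq φ x) →
      -- the Bingham variational inequality
      (∀ v : V3 → V3, ContDiff ℝ 1 v →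
        (∀ i, tsupport (fun x => v x i) ⊆ thinDom ε G) → (∀ x, divg v x = 0) →
        μ * ε ^ 2 * ∫ x in thinDom ε G, gradInner u (fun z => v z - u z) x
          + g * ε * ∫ x in thinDom ε G, gradNorm v x
          - g * ε * ∫ x in thinDom ε G, gradNorm u x
        ≥ ∫ x in thinDom ε G, ∑ i, f x i * (v x i - u x i)) →
      -- conclusions: `ε|||∇u_ε||| ≤ C'` and `|||u_ε||| ≤ C'`
      ε * Real.sqrt (ε⁻¹ * ∫ x in thinDom ε G, gradSq u x) ≤ C'
        ∧ Real.sqrt (ε⁻¹ * ∫ x in thinDom ε G, vnormSq u x) ≤ C' := by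
  
  set K : ℝ := Cp * C / μ with hK
  have hKpos : 0 < K := by positivity
  refine ⟨(1 + Cp) * K, by positivity, ?_⟩
  intro ε hε u f hu hsupp hdiv hF hfint hP hVI
  set D := thinDom ε G with hD
  set A := ∫ x in D, gradSq u x with hA
  set B := ∫ x in D, vnormSq u x with hB
  set F := ∫ x in D, vnormSq f x with hFdef
  set I := ∫ x in D, ∑ i, f x i * u x i with hI
  -- nonnegativity of the square integrals
  have hBnn : 0 ≤ B := integral_nonneg fun x => Finset.sum_nonneg fun i _ => sq_nonneg _
  have hFnn : 0 ≤ F := integral_nonneg fun x => Finset.sum_nonneg fun i _ => sq_nonneg _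
  -- `F ≤ ε * C ^ 2`
  have hFb : F ≤ ε * C ^ 2 := by
    have h1 : 0 ≤ ε⁻¹ * F := by positivity
    have h2 : ε⁻¹ * F ≤ C ^ 2 := by
      nlinarith [Real.sq_sqrt h1, Real.sqrt_nonneg (ε⁻¹ * F), hF]
    rw [inv_mul_le_iff₀ hε] at h2
    linarith [h2]
  -- Poincaré: `B ≤ (ε Cp)^2 A`
  have hPoin : B ≤ (ε * Cp) ^ 2 * A := hP u hu hsupp
  -- boundedness of the thin domain and integrability of `vnormSq u`
  have hbd : Bornology.IsBounded D := by
    rw [isBounded_iff_forall_norm_le]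
    refine ⟨1 + ε * G1, fun x hx => ?_⟩
    obtain ⟨⟨h0, h1, h2, h3⟩, h4, h5⟩ := hx
    have hG1 : 0 < G1 := lt_of_lt_of_le hG0 (le_trans (hGlb 0) (hGub 0))
    have hx2 : x 2 ≤ ε * G1 := le_trans h5.le (by nlinarith [hGub ![x 0 / ε, x 1 / ε]])
    have hnn : (0:ℝ) ≤ 1 + ε * G1 := by positivity
    rw [pi_norm_le_iff_of_nonneg hnn]
    intro i
    have h0' : 0 < x 0 := by simpa [hat] using h0
    have h1' : x 0 < 1 := by simpa [hat] using h1
    have h2' : 0 < x 1 := by simpa [hat] using h2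
    have h3' : x 1 < 1 := by simpa [hat] using h3
    have hεG : 0 < ε * G1 := mul_pos hε hG1
    have key : ∀ j : Fin 3, 0 < x j ∧ x j ≤ 1 + ε * G1 := by
      intro j
      match j with
      | 0 => exact ⟨h0', by nlinarith⟩
      | 1 => exact ⟨h2', by nlinarith⟩
      | 2 => exact ⟨h4, by nlinarith⟩
    rw [Real.norm_eq_abs, abs_le]
    exact ⟨by nlinarith [(key i).1], (key i).2⟩
  have hKcomp : IsCompact (closure D) := hbd.isCompact_closure
  have husupp : ∀ x ∉ closure D, ∀ i, u x i = 0 := by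
    intro x hx i
    have hns : x ∉ tsupport (fun y => u y i) := fun hmem => hx (subset_closure (hsupp i hmem))
    exact image_eq_zero_of_notMem_tsupport (f := fun y => u y i) hns
  have huint : IntegrableOn (fun x => vnormSq u x) D := by
    refine (Continuous.integrable_of_hasCompactSupport ?_ ?_).integrableOn
    · unfold vnormSq
      exact continuous_finset_sum _ fun i _ => ((continuous_apply i).comp hu.continuous).pow 2
    · refine HasCompactSupport.intro hKcomp fun x hx => ?_
      unfold vnormSq
      exact Finset.sum_eq_zero fun i _ => by rw [husupp x hx i]; ring
  -- integrability of `gradSq u`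
  have hpdcont : ∀ i j : Fin 3, Continuous fun x => pd3 j (fun z => u z i) x := by
    intro i j
    have hci : ContDiff ℝ 1 fun z => u z i := (contDiff_pi.mp hu) i
    have hfd : Continuous fun x => fderiv ℝ (fun z => u z i) x :=
      hci.continuous_fderiv one_ne_zero
    exact hfd.clm_apply continuous_const
  have hgradcont : Continuous fun x => gradSq u x := by
    unfold gradSq
    exact continuous_finset_sum _ fun i _ =>
      continuous_finset_sum _ fun j _ => ((hpdcont i j).pow 2)
  have hpd0 : ∀ x ∉ closure D, ∀ i j : Fin 3, pd3 j (fun z => u z i) x = 0 := by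
    intro x hx i j
    have hev : (fun z => u z i) =ᶠ[nhds x] (fun _ => 0) := by
      refine Filter.eventuallyEq_iff_exists_mem.mpr
        ⟨(closure D)ᶜ, isClosed_closure.isOpen_compl.mem_nhds hx, fun y hy => husupp y hy i⟩
    unfold pd3
    rw [hev.fderiv_eq, fderiv_fun_const]
    simp
  have hgint : IntegrableOn (fun x => gradSq u x) D := by
    refine (Continuous.integrable_of_hasCompactSupport hgradcont ?_).integrableOn
    refine HasCompactSupport.intro hKcomp fun x hx => ?_
    unfold gradSq
    exact Finset.sum_eq_zero fun i _ => Finset.sum_eq_zero fun j _ => by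
      rw [hpd0 x hx i j]; ring
  have hvolD : volume D < ⊤ := hbd.measure_lt_top
  set vol : ℝ := (volume D).toReal with hvol
  have hvolnn : 0 ≤ vol := ENNReal.toReal_nonneg
  set N : ℝ := ∫ x in D, gradNorm u x with hN
  have hNnn : 0 ≤ N := integral_nonneg fun x => Real.sqrt_nonneg _
  -- the variational inequality with `v = 0` gives `μ ε² A ≤ I`
  have hgi : ∀ x, gradInner u (fun z => (fun _ : V3 => (0:V3)) z - u z) x = -gradSq u x := by
    intro x
    unfold gradInner gradSq pd3
    rw [← Finset.sum_neg_distrib]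
    refine Finset.sum_congr rfl fun i _ => ?_
    rw [← Finset.sum_neg_distrib]
    refine Finset.sum_congr rfl fun j _ => ?_
    have he : (fun z => ((fun _ : V3 => (0:V3)) z - u z) i) = fun z => -(u z i) := by
      funext z; simp
    rw [he, fderiv_fun_neg]
    simp [mul_neg, pow_two]
  have hVI0 := hVI (fun _ => 0) contDiff_const
    (fun i => by
      have h0 : (tsupport fun x => (fun _ : V3 => (0:V3)) x i) = ∅ := by
        simp [tsupport, Function.support]
      rw [h0]; exact empty_subset _)
    (fun x => by unfold divg pd3; simp [fderiv_const])
  have hVI1 : μ * ε ^ 2 * (∫ x in D, (gradInner u (fun z => (fun _ : V3 => (0:V3)) z - u z) x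
        + g * ε * (∫ y in D, (gradNorm (fun _ : V3 => (0:V3)) y - g * ε * N))))
      ≥ ∫ x in D, ∑ i, f x i * ((fun _ : V3 => (0:V3)) x i - u x i) := hVI0
  have hInner : (∫ y in D, (gradNorm (fun _ : V3 => (0:V3)) y - g * ε * N))
      = vol * (-(g * ε * N)) := by
    have h0 : (fun y : V3 => gradNorm (fun _ : V3 => (0:V3)) y - g * ε * N)
        = fun _ : V3 => -(g * ε * N) := by
      funext y
      have hgn : gradNorm (fun _ : V3 => (0:V3)) y = 0 := by
        unfold gradNorm gradSq pd3; simp [fderiv_const]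
      rw [hgn]; ring
    rw [h0, setIntegral_const, smul_eq_mul, measureReal_def, hvol]
  rw [hInner] at hVI1
  simp only [hgi] at hVI1
  have hOuter : (∫ x in D, (-gradSq u x + g * ε * (vol * (-(g * ε * N)))))
      = -A + vol * (g * ε * (vol * (-(g * ε * N)))) := by
    have h1 : IntegrableOn (fun x => -gradSq u x) D := hgint.neg
    have h2 : IntegrableOn (fun _ : V3 => g * ε * (vol * (-(g * ε * N)))) D :=
      integrableOn_const hvolD.ne
    rw [integral_add h1 h2, integral_neg, setIntegral_const, smul_eq_mul, ← hA, measureReal_def, ← hvol]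
  rw [hOuter] at hVI1
  have hIeq : (∫ x in D, ∑ i, f x i * ((fun _ : V3 => (0:V3)) x i - u x i)) = -I := by
    have hfe : (fun x => ∑ i, f x i * ((fun _ : V3 => (0:V3)) x i - u x i))
        = fun x => -(∑ i, f x i * u x i) := by
      funext x
      rw [← Finset.sum_neg_distrib]
      exact Finset.sum_congr rfl fun i _ => by simp
    rw [hfe, integral_neg, hI]
  rw [hIeq] at hVI1
  have hmain : μ * ε ^ 2 * A ≤ I := by
    have hc : g * ε * (vol * (-(g * ε * N))) ≤ 0 := by
      have : 0 ≤ g * ε * (vol * (g * ε * N)) := by positivity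
      nlinarith
    nlinarith [hVI1, mul_nonneg (mul_nonneg hμ.le (sq_nonneg ε)) hvolnn,
      mul_nonneg (mul_nonneg (mul_nonneg hμ.le (sq_nonneg ε)) hvolnn) (neg_nonneg.mpr hc)]
  -- Young's inequality pointwise with `t = Cp²/μ`
  set t : ℝ := Cp ^ 2 / μ with ht
  have htpos : 0 < t := by positivity
  have hIb : I ≤ t / 2 * F + 1 / (2 * t) * B := by
    by_cases hint : IntegrableOn (fun x => ∑ i, f x i * u x i) D
    · have hptw : ∀ x, (∑ i, f x i * u x i)
          ≤ t / 2 * vnormSq f x + 1 / (2 * t) * vnormSq u x := by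
        intro x
        unfold vnormSq
        rw [Finset.mul_sum, Finset.mul_sum, ← Finset.sum_add_distrib]
        refine Finset.sum_le_sum fun i _ => ?_
        have key : t / 2 * f x i ^ 2 + 1 / (2 * t) * u x i ^ 2 - f x i * u x i
            = (t * f x i - u x i) ^ 2 / (2 * t) := by
          field_simp
          ring
        have hnn : 0 ≤ (t * f x i - u x i) ^ 2 / (2 * t) :=
          div_nonneg (sq_nonneg _) (by positivity)
        linarith [key, hnn]
      have hrint : IntegrableOn
          (fun x => t / 2 * vnormSq f x + 1 / (2 * t) * vnormSq u x) D :=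
        (hfint.const_mul _).add (huint.const_mul _)
      calc I ≤ ∫ x in D, (t / 2 * vnormSq f x + 1 / (2 * t) * vnormSq u x) :=
            integral_mono hint hrint hptw
        _ = t / 2 * F + 1 / (2 * t) * B := by
            rw [integral_add (hfint.const_mul _) (huint.const_mul _),
              integral_const_mul, integral_const_mul]
    · have : I = 0 := integral_undef hint
      rw [this]; positivity
  -- conclude `ε * A ≤ K ^ 2`
  have hAb : ε * A ≤ K ^ 2 := by
    have h1 : μ * ε ^ 2 * A ≤ t / 2 * (ε * C ^ 2) + 1 / (2 * t) * ((ε * Cp) ^ 2 * A) := by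
      calc μ * ε ^ 2 * A ≤ I := hmain
        _ ≤ t / 2 * F + 1 / (2 * t) * B := hIb
        _ ≤ t / 2 * (ε * C ^ 2) + 1 / (2 * t) * ((ε * Cp) ^ 2 * A) := by
            gcongr
    have ht2 : 1 / (2 * t) * ((ε * Cp) ^ 2 * A) = μ / 2 * (ε ^ 2 * A) := by
      rw [ht]; field_simp
    have ht3 : t / 2 * (ε * C ^ 2) = Cp ^ 2 * C ^ 2 / (2 * μ) * ε := by
      rw [ht]; field_simp
    rw [ht2, ht3] at h1
    have h4 : (μ / 2 * ε) * (ε * A) ≤ (μ / 2 * ε) * (Cp ^ 2 * C ^ 2 / μ ^ 2) := by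
      have h6 : Cp ^ 2 * C ^ 2 / (2 * μ) * ε = (μ / 2 * ε) * (Cp ^ 2 * C ^ 2 / μ ^ 2) := by
        field_simp
      nlinarith [h1, h6]
    have h5 : ε * A ≤ Cp ^ 2 * C ^ 2 / μ ^ 2 :=
      le_of_mul_le_mul_left h4 (by positivity)
    calc ε * A ≤ Cp ^ 2 * C ^ 2 / μ ^ 2 := h5
      _ = K ^ 2 := by rw [hK]; field_simp
  have hBb : ε⁻¹ * B ≤ (Cp * K) ^ 2 := by
    have h1 : ε⁻¹ * B ≤ ε⁻¹ * ((ε * Cp) ^ 2 * A) := by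
      apply mul_le_mul_of_nonneg_left hPoin (by positivity)
    have h2 : ε⁻¹ * ((ε * Cp) ^ 2 * A) = Cp ^ 2 * (ε * A) := by field_simp
    calc ε⁻¹ * B ≤ Cp ^ 2 * (ε * A) := by rw [← h2]; exact h1
      _ ≤ Cp ^ 2 * K ^ 2 := by nlinarith [hAb, sq_nonneg Cp]
      _ = (Cp * K) ^ 2 := by ring
  constructor
  · have : ε * Real.sqrt (ε⁻¹ * A) = Real.sqrt (ε * A) := by
      rw [← Real.sqrt_sq hε.le, ← Real.sqrt_mul (sq_nonneg ε)]
      congr 1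
      field_simp
      rw [Real.sq_sqrt (sq_nonneg ε)]
    rw [this]
    calc Real.sqrt (ε * A) ≤ Real.sqrt (K ^ 2) := Real.sqrt_le_sqrt hAb
      _ = K := Real.sqrt_sq hKpos.le
      _ ≤ (1 + Cp) * K := by nlinarith
  · calc Real.sqrt (ε⁻¹ * B) ≤ Real.sqrt ((Cp * K) ^ 2) := Real.sqrt_le_sqrt hBb
      _ = Cp * K := Real.sqrt_sq (by positivity)
      _ ≤ (1 + Cp) * K := by nlinarith
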